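/- Let F be a finite field with q elements and characteristic different from 2, and let t = diag(1, 1, -1, -1) ∈ GL_4(F). The number of involutions x ∈ GL_4(F) with x ≠ t, rank(x - 1) = 2, and image(x - 1) = image(t - 1) equals q⁴ - 1. Each such x has the block form [[I_2, 0],[A, -I_2]] for a unique 2×2 matrix A ≠ 0. -/

import Mathlib

open Matrix LinearMap

namespace Stmt17Aux

variable {F : Type*} [Field F]

/-- The subspace of vectors vanishing on the `inl` coordinates. -/
noncomputable def K (F : Type*) [Field F] : Submodule F ((Fin 2 ⊕ Fin 2) → F) :=
  LinearMap.ker (LinearMap.funLeft F F (Sum.inl : Fin 2 → Fin 2 ⊕ Fin 2))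

lemma mem_K {w : (Fin 2 ⊕ Fin 2) → F} : w ∈ K F ↔ ∀ i, w (Sum.inl i) = 0 := by
  simp [K, LinearMap.mem_ker, funext_iff, LinearMap.funLeft_apply]

lemma neg_one_sub_one : (-1 : Matrix (Fin 2) (Fin 2) F) - 1 = (-2 : F) • 1 := by
  ext i j
  by_cases h : i = j <;> simp [h, Matrix.one_apply] <;> ring

lemma sub_one_eq (A : Matrix (Fin 2) (Fin 2) F) :
    (fromBlocks 1 0 A (-1) : Matrix (Fin 2 ⊕ Fin 2) (Fin 2 ⊕ Fin 2) F) - 1 =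
      fromBlocks 0 0 A ((-2 : F) • 1) := by
  rw [← fromBlocks_one, sub_eq_add_neg, fromBlocks_neg, fromBlocks_add]
  ext i j
  rcases i with i|i <;> rcases j with j|j <;>
    simp [Matrix.one_apply, Matrix.fromBlocks] <;> split_ifs <;> ring

lemma range_block (h2 : (2 : F) ≠ 0) (C : Matrix (Fin 2) (Fin 2) F) :
    LinearMap.range (fromBlocks 0 0 C ((-2 : F) • 1) :
      Matrix (Fin 2 ⊕ Fin 2) (Fin 2 ⊕ Fin 2) F).mulVecLin = K F := by
  apply le_antisymm
  · rintro w ⟨v, rfl⟩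
    rw [mem_K]
    intro i
    simp [mulVecLin_apply, fromBlocks_mulVec]
  · intro w hw
    refine ⟨Sum.elim 0 ((-2 : F)⁻¹ • (w ∘ Sum.inr)), ?_⟩
    rw [mulVecLin_apply, fromBlocks_mulVec]
    funext j
    cases j with
    | inl i => simp [(mem_K.mp hw) i]
    | inr i =>
      simp [Matrix.neg_mulVec, Matrix.smul_mulVec, Matrix.one_mulVec, smul_smul]
      field_simp

lemma forward (x : Matrix (Fin 2 ⊕ Fin 2) (Fin 2 ⊕ Fin 2) F)
    (hx2 : x * x = 1)
    (hr : LinearMap.range (x - 1).mulVecLin = K F) :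
    x = fromBlocks 1 0 x.toBlocks₂₁ (-1) := by
  classical
  have htop : ∀ i j, (x - 1) (Sum.inl i) j = 0 := by
    intro i j
    have hmem : (x - 1) *ᵥ Pi.single j 1 ∈ K F := by
      rw [← hr]; exact ⟨Pi.single j 1, rfl⟩
    simpa using mem_K.mp hmem i
  set C := x.toBlocks₂₁ with hC
  set D := x.toBlocks₂₂ with hD
  have h11 : x.toBlocks₁₁ = 1 := by
    ext i j
    have h := htop i (Sum.inl j)
    rw [Matrix.sub_apply, sub_eq_zero] at h
    simpa [Matrix.toBlocks₁₁, Matrix.one_apply] using h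
  have h12 : x.toBlocks₁₂ = 0 := by
    ext i j
    have h := htop i (Sum.inr j)
    rw [Matrix.sub_apply, sub_eq_zero] at h
    simpa [Matrix.toBlocks₁₂, Matrix.one_apply] using h
  have hx : x = fromBlocks 1 0 C D := by
    conv_lhs => rw [← fromBlocks_toBlocks x]
    rw [h11, h12, ← hC, ← hD]
  rw [hx, ← fromBlocks_one, fromBlocks_multiply] at hx2
  have h21 : C * 1 + D * C = 0 := by
    have := congrArg Matrix.toBlocks₂₁ hx2
    rwa [Matrix.toBlocks_fromBlocks₂₁, Matrix.toBlocks_fromBlocks₂₁] at this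
  have h22 : C * 0 + D * D = 1 := by
    have := congrArg Matrix.toBlocks₂₂ hx2
    rwa [Matrix.toBlocks_fromBlocks₂₂, Matrix.toBlocks_fromBlocks₂₂] at this
  rw [mul_one] at h21
  rw [mul_zero, zero_add] at h22
  have hDC : D * C = -C := by
    have h := h21
    rw [add_comm, add_eq_zero_iff_eq_neg] at h
    exact h
  have hsub : x - 1 = fromBlocks 0 0 C (D - 1) := by
    rw [hx, ← fromBlocks_one, sub_eq_add_neg, fromBlocks_neg, fromBlocks_add]
    simp [sub_eq_add_neg]
  have hDw : ∀ w : Fin 2 → F, D *ᵥ w = -w := by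
    intro w
    have hmem : Sum.elim (0 : Fin 2 → F) w ∈ K F := mem_K.mpr (fun i => rfl)
    rw [← hr] at hmem
    obtain ⟨v, hv⟩ := hmem
    rw [mulVecLin_apply, hsub, fromBlocks_mulVec] at hv
    have hv2 : C *ᵥ (v ∘ Sum.inl) + (D - 1) *ᵥ (v ∘ Sum.inr) = w := by
      funext i
      simpa only [Sum.elim_inr, Pi.add_apply] using congrFun hv (Sum.inr i)
    calc D *ᵥ w = D *ᵥ (C *ᵥ (v ∘ Sum.inl) + (D - 1) *ᵥ (v ∘ Sum.inr)) := by rw [hv2]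
      _ = (D * C) *ᵥ (v ∘ Sum.inl) + (D * (D - 1)) *ᵥ (v ∘ Sum.inr) := by
          rw [Matrix.mulVec_add, Matrix.mulVec_mulVec, Matrix.mulVec_mulVec]
      _ = (-C) *ᵥ (v ∘ Sum.inl) + (-(D - 1)) *ᵥ (v ∘ Sum.inr) := by
          rw [hDC, mul_sub, h22, mul_one, neg_sub]
      _ = -(C *ᵥ (v ∘ Sum.inl) + (D - 1) *ᵥ (v ∘ Sum.inr)) := by
          rw [Matrix.neg_mulVec, Matrix.neg_mulVec, neg_add]
      _ = -w := by rw [hv2]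
  have hDneg : D = -1 := by
    ext i j
    have h := congrFun (hDw (Pi.single j 1)) i
    simp [Pi.single_apply, Matrix.one_apply] at h ⊢
    by_cases hij : i = j <;> simp [hij] at h ⊢ <;> exact h
  rw [hx, hDneg]

lemma range_t (h2 : (2 : F) ≠ 0) :
    LinearMap.range ((Matrix.fromBlocks (1 : Matrix (Fin 2) (Fin 2) F) 0 0
        (-1 : Matrix (Fin 2) (Fin 2) F)) - 1).mulVecLin = K F := by
  rw [sub_one_eq (0 : Matrix (Fin 2) (Fin 2) F)]
  exact range_block h2 0

lemma finrank_K : Module.finrank F (K F) = 2 := by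
  have hsurj : Function.Surjective
      (LinearMap.funLeft F F (Sum.inl : Fin 2 → Fin 2 ⊕ Fin 2)) :=
    LinearMap.funLeft_surjective_of_injective _ _ _ Sum.inl_injective
  have h := LinearMap.finrank_range_add_finrank_ker
    (LinearMap.funLeft F F (Sum.inl : Fin 2 → Fin 2 ⊕ Fin 2))
  rw [LinearMap.range_eq_top.mpr hsurj, finrank_top] at h
  simp only [Module.finrank_pi, Fintype.card_sum, Fintype.card_fin] at h
  have : Module.finrank F (K F) = Module.finrank F
      (LinearMap.ker (LinearMap.funLeft F F (Sum.inl : Fin 2 → Fin 2 ⊕ Fin 2))) := rfl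
  omega

lemma backward (h2 : (2 : F) ≠ 0) (A : Matrix (Fin 2) (Fin 2) F) (hA : A ≠ 0) :
    (fromBlocks 1 0 A (-1) : Matrix (Fin 2 ⊕ Fin 2) (Fin 2 ⊕ Fin 2) F) *
        fromBlocks 1 0 A (-1) = 1 ∧
      (fromBlocks 1 0 A (-1) : Matrix (Fin 2 ⊕ Fin 2) (Fin 2 ⊕ Fin 2) F) ≠
        fromBlocks 1 0 0 (-1) ∧
      ((fromBlocks 1 0 A (-1) : Matrix (Fin 2 ⊕ Fin 2) (Fin 2 ⊕ Fin 2) F) - 1).rank = 2 ∧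
      LinearMap.range ((fromBlocks 1 0 A (-1) :
          Matrix (Fin 2 ⊕ Fin 2) (Fin 2 ⊕ Fin 2) F) - 1).mulVecLin = K F := by
  refine ⟨?_, ?_, ?_, ?_⟩
  · rw [fromBlocks_multiply]
    have e1 : (1 : Matrix (Fin 2) (Fin 2) F) * 1 + 0 * A = 1 := by simp
    have e2 : (1 : Matrix (Fin 2) (Fin 2) F) * 0 + 0 * (-1) = 0 := by simp
    have e3 : A * 1 + (-1) * A = 0 := by simp [neg_one_mul]
    have e4 : A * 0 + (-1 : Matrix (Fin 2) (Fin 2) F) * (-1) = 1 := by simp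
    rw [e1, e2, e3, e4, fromBlocks_one]
  · intro h
    apply hA
    have := congrArg Matrix.toBlocks₂₁ h
    simpa [Matrix.toBlocks_fromBlocks₂₁] using this
  · rw [sub_one_eq]
    unfold Matrix.rank
    rw [range_block h2 A, finrank_K]
  · rw [sub_one_eq]
    exact range_block h2 A

end Stmt17Aux

theorem stmt_17 {F : Type*} [Field F] [Fintype F] [DecidableEq F]
    (hF : ringChar F ≠ 2) :
    Nat.card {x : Matrix (Fin 2 ⊕ Fin 2) (Fin 2 ⊕ Fin 2) F //
        x * x = 1 ∧ x ≠ Matrix.fromBlocks 1 0 0 (-1) ∧ (x - 1).rank = 2 ∧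
        LinearMap.range (x - 1).mulVecLin =
          LinearMap.range ((Matrix.fromBlocks (1 : Matrix (Fin 2) (Fin 2) F) 0 0
            (-1 : Matrix (Fin 2) (Fin 2) F)) - 1).mulVecLin} =
      (Fintype.card F) ^ 4 - 1 ∧
    ∀ x : Matrix (Fin 2 ⊕ Fin 2) (Fin 2 ⊕ Fin 2) F,
      x * x = 1 → x ≠ Matrix.fromBlocks 1 0 0 (-1) → (x - 1).rank = 2 →
      LinearMap.range (x - 1).mulVecLin =
        LinearMap.range ((Matrix.fromBlocks (1 : Matrix (Fin 2) (Fin 2) F) 0 0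
          (-1 : Matrix (Fin 2) (Fin 2) F)) - 1).mulVecLin →
      ∃! A : Matrix (Fin 2) (Fin 2) F, A ≠ 0 ∧ x = Matrix.fromBlocks 1 0 A (-1) := by
  classical
  have h2 : (2 : F) ≠ 0 := Ring.two_ne_zero hF
  have hrt := Stmt17Aux.range_t (F := F) h2
  constructor
  · have e : {x : Matrix (Fin 2 ⊕ Fin 2) (Fin 2 ⊕ Fin 2) F //
        x * x = 1 ∧ x ≠ Matrix.fromBlocks 1 0 0 (-1) ∧ (x - 1).rank = 2 ∧
        LinearMap.range (x - 1).mulVecLin =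
          LinearMap.range ((Matrix.fromBlocks (1 : Matrix (Fin 2) (Fin 2) F) 0 0
            (-1 : Matrix (Fin 2) (Fin 2) F)) - 1).mulVecLin} ≃
        {A : Matrix (Fin 2) (Fin 2) F // A ≠ 0} :=
    { toFun := fun x => ⟨x.1.toBlocks₂₁, by
        obtain ⟨hm, hne, hrk, hrg⟩ := x.2
        intro h0
        apply hne
        have hx := Stmt17Aux.forward x.1 hm (by rw [hrg, hrt])
        rw [hx, h0]⟩
      invFun := fun A => ⟨Matrix.fromBlocks 1 0 A.1 (-1), by
        obtain ⟨hm, hne, hrk, hrg⟩ := Stmt17Aux.backward h2 A.1 A.2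
        exact ⟨hm, hne, hrk, by rw [hrg, hrt]⟩⟩
      left_inv := fun x => by
        obtain ⟨hm, hne, hrk, hrg⟩ := x.2
        exact Subtype.ext (Stmt17Aux.forward x.1 hm (by rw [hrg, hrt])).symm
      right_inv := fun A => Subtype.ext (by
        simp [Matrix.toBlocks_fromBlocks₂₁]) }
    rw [Nat.card_congr e, Nat.card_eq_fintype_card]
    have hc : Fintype.card {A : Matrix (Fin 2) (Fin 2) F // A ≠ 0} =
        Fintype.card (Matrix (Fin 2) (Fin 2) F) -
          Fintype.card {A : Matrix (Fin 2) (Fin 2) F // A = 0} :=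
      Fintype.card_subtype_compl _
    rw [hc, Fintype.card_subtype_eq]
    have hm : Fintype.card (Matrix (Fin 2) (Fin 2) F) = Fintype.card F ^ 4 := by
      have h : Fintype.card (Matrix (Fin 2) (Fin 2) F) =
          Fintype.card (Fin 2 → Fin 2 → F) := rfl
      rw [h, Fintype.card_fun, Fintype.card_fun, Fintype.card_fin, ← pow_mul]
    rw [hm]
  · intro x hm hne hrk hrg
    have hx := Stmt17Aux.forward x hm (by rw [hrg, hrt])
    refine ⟨x.toBlocks₂₁, ⟨fun h0 => hne (by rw [hx, h0]), hx⟩, ?_⟩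
    rintro B ⟨hB0, hBx⟩
    have hB := congrArg Matrix.toBlocks₂₁ hBx
    simpa [Matrix.toBlocks_fromBlocks₂₁] using hB.symm
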